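/- Let y = y(x) be the formal power series over ℚ(a) (in variable x) uniquely determined by y(0) = 1 and the algebraic equation 1 − y + a²·x·y^f + x·y^{f+1} = 0, for a fixed positive integer f. Then every coefficient of y(x) lies in ℕ[a²]; in particular at a = 1 the coefficients of y for f = 1 are 1, 2, 6, 22, 90, … and for f = 2 are 1, 2, 10, 66, 498, …. -/

import Mathlib

noncomputable section

open PowerSeries

/-- The constant power series whose value is the polynomial `a ^ n`. -/
def Ca (n : ℕ) : PowerSeries (Polynomial ℚ) := PowerSeries.C (Polynomial.X ^ n)

def goodQ : Subsemiring ℚ := (Nat.castRingHom ℚ).rangeS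

def goodP : Subsemiring (Polynomial ℚ) where
  carrier := {p | ∀ k : ℕ, p.coeff (2*k+1) = 0 ∧ p.coeff (2*k) ∈ goodQ}
  zero_mem' := by
    intro k
    refine ⟨by simp, ?_⟩
    simp only [Polynomial.coeff_zero]
    exact Subsemiring.zero_mem _
  one_mem' := by
    intro k
    refine ⟨by simp [Polynomial.coeff_one], ?_⟩
    simp only [Polynomial.coeff_one]
    split_ifs
    · exact ⟨1, by simp⟩
    · exact Subsemiring.zero_mem _
  add_mem' := by
    intro p q hp hq k
    refine ⟨?_, ?_⟩
    · simp [(hp k).1, (hq k).1]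
    · simp only [Polynomial.coeff_add]
      exact Subsemiring.add_mem _ (hp k).2 (hq k).2
  mul_mem' := by
    intro p q hp hq k
    constructor
    · rw [Polynomial.coeff_mul]
      apply Finset.sum_eq_zero
      intro x hx
      have hx' : x.1 + x.2 = 2*k+1 := Finset.HasAntidiagonal.mem_antidiagonal.mp hx
      rcases Nat.even_or_odd x.1 with ⟨a, ha⟩ | ⟨a, ha⟩
      · have e2 : x.2 = 2*(k-a)+1 := by omega
        rw [e2, (hq (k-a)).1, mul_zero]
      · have e1 : x.1 = 2*a+1 := by omega
        rw [e1, (hp a).1, zero_mul]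
    · rw [Polynomial.coeff_mul]
      apply Subsemiring.sum_mem
      intro x hx
      have hx' : x.1 + x.2 = 2*k := Finset.HasAntidiagonal.mem_antidiagonal.mp hx
      rcases Nat.even_or_odd x.1 with ⟨a, ha⟩ | ⟨a, ha⟩
      · have e1 : x.1 = 2*a := by omega
        have e2 : x.2 = 2*(k-a) := by omega
        rw [e1, e2]
        exact Subsemiring.mul_mem _ (hp a).2 (hq (k-a)).2
      · have e1 : x.1 = 2*a+1 := by omega
        rw [e1, (hp a).1, zero_mul]
        exact Subsemiring.zero_mem _

lemma X_sq_mem_goodP : (Polynomial.X ^ 2 : Polynomial ℚ) ∈ goodP := by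
  intro k
  constructor
  · rw [Polynomial.coeff_X_pow]
    simp only [ite_eq_right_iff]
    intro h; omega
  · rw [Polynomial.coeff_X_pow]
    split_ifs
    · exact ⟨1, by simp⟩
    · exact Subsemiring.zero_mem _

lemma pow_coeff_mem (y : PowerSeries (Polynomial ℚ)) (n : ℕ)
    (h : ∀ i ≤ n, PowerSeries.coeff i y ∈ goodP) :
    ∀ m : ℕ, ∀ j ≤ n, PowerSeries.coeff j (y ^ m) ∈ goodP := by
  intro m
  induction m with
  | zero =>
    intro j hj
    rw [pow_zero, PowerSeries.coeff_one]
    split_ifs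
    · exact Subsemiring.one_mem _
    · exact Subsemiring.zero_mem _
  | succ m ih =>
    intro j hj
    rw [pow_succ, PowerSeries.coeff_mul]
    apply Subsemiring.sum_mem
    intro x hx
    have hx' : x.1 + x.2 = j := Finset.HasAntidiagonal.mem_antidiagonal.mp hx
    exact Subsemiring.mul_mem _ (ih x.1 (by omega)) (h x.2 (by omega))

theorem framed_unknot_A_polynomial_solution (f : ℕ) (hf : 1 ≤ f)
    (y : PowerSeries (Polynomial ℚ))
    (h0 : PowerSeries.constantCoeff y = 1)
    (heq : 1 - y + Ca 2 * PowerSeries.X * y ^ f + PowerSeries.X * y ^ (f + 1) = 0) :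
    (∀ n k : ℕ,
      (PowerSeries.coeff n y).coeff (2 * k + 1) = 0 ∧
      ∃ m : ℕ, (PowerSeries.coeff n y).coeff (2 * k) = (m : ℚ)) ∧
    (f = 1 →
      Polynomial.eval 1 (PowerSeries.coeff 0 y) = 1 ∧
      Polynomial.eval 1 (PowerSeries.coeff 1 y) = 2 ∧
      Polynomial.eval 1 (PowerSeries.coeff 2 y) = 6 ∧
      Polynomial.eval 1 (PowerSeries.coeff 3 y) = 22 ∧
      Polynomial.eval 1 (PowerSeries.coeff 4 y) = 90) ∧
    (f = 2 →
      Polynomial.eval 1 (PowerSeries.coeff 0 y) = 1 ∧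
      Polynomial.eval 1 (PowerSeries.coeff 1 y) = 2 ∧
      Polynomial.eval 1 (PowerSeries.coeff 2 y) = 10 ∧
      Polynomial.eval 1 (PowerSeries.coeff 3 y) = 66 ∧
      Polynomial.eval 1 (PowerSeries.coeff 4 y) = 498) := by
  -- the recurrence on coefficients
  have hrec : ∀ n : ℕ, PowerSeries.coeff (n+1) y =
      Polynomial.X ^ 2 * PowerSeries.coeff n (y ^ f) +
      PowerSeries.coeff n (y ^ (f+1)) := by
    intro n
    have h1 := congrArg (PowerSeries.coeff (n+1)) heq
    have e : Ca 2 * PowerSeries.X * y ^ f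
        = PowerSeries.C (Polynomial.X ^ 2) * (PowerSeries.X * y ^ f) := by
      rw [Ca]; ring
    rw [e] at h1
    simp only [map_add, map_sub, PowerSeries.coeff_one, PowerSeries.coeff_C_mul,
      PowerSeries.coeff_succ_X_mul, map_zero, Nat.succ_ne_zero, if_neg,
      Nat.add_eq_zero, and_false] at h1
    simp only [if_false] at h1
    linear_combination -h1
  -- part 1: membership
  have hmem : ∀ n : ℕ, PowerSeries.coeff n y ∈ goodP := by
    intro n
    induction n using Nat.strong_induction_on with
    | _ n ih =>
      match n with
      | 0 =>
        have : PowerSeries.coeff 0 y = 1 := by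
          rw [PowerSeries.coeff_zero_eq_constantCoeff, h0]
        rw [this]
        exact Subsemiring.one_mem _
      | Nat.succ n =>
        rw [hrec n]
        have hle : ∀ i ≤ n, PowerSeries.coeff i y ∈ goodP := by
          intro i hi; exact ih i (by omega)
        exact Subsemiring.add_mem _
          (Subsemiring.mul_mem _ X_sq_mem_goodP (pow_coeff_mem y n hle f n le_rfl))
          (pow_coeff_mem y n hle (f+1) n le_rfl)
  -- setup for numeric evaluation at a = 1
  set z : PowerSeries ℚ := PowerSeries.map (Polynomial.evalRingHom (1:ℚ)) y with hz
  have hcoe : ∀ n : ℕ, Polynomial.eval 1 (PowerSeries.coeff n y)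
      = PowerSeries.coeff n z := by
    intro n
    rw [hz, PowerSeries.coeff_map, Polynomial.coe_evalRingHom]
  have key : ∀ (m n : ℕ), PowerSeries.coeff n (z ^ m)
      = Polynomial.eval 1 (PowerSeries.coeff n (y ^ m)) := by
    intro m n
    rw [hz, ← map_pow, PowerSeries.coeff_map, Polynomial.coe_evalRingHom]
  have recz : ∀ n : ℕ, PowerSeries.coeff (n+1) z
      = PowerSeries.coeff n (z ^ f) + PowerSeries.coeff n (z ^ (f+1)) := by
    intro n
    rw [key, key, ← hcoe, hrec n]
    simp
  have c0 : PowerSeries.coeff 0 z = 1 := by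
    rw [← hcoe, PowerSeries.coeff_zero_eq_constantCoeff, h0]
    simp
  have sq : ∀ n : ℕ, PowerSeries.coeff n (z*z)
      = ∑ k ∈ Finset.range (n+1), PowerSeries.coeff k z * PowerSeries.coeff (n-k) z := by
    intro n
    rw [PowerSeries.coeff_mul, Finset.Nat.sum_antidiagonal_eq_sum_range_succ_mk]
  have cu : ∀ n : ℕ, PowerSeries.coeff n (z*(z*z))
      = ∑ k ∈ Finset.range (n+1), PowerSeries.coeff k z * PowerSeries.coeff (n-k) (z*z) := by
    intro n
    rw [PowerSeries.coeff_mul, Finset.Nat.sum_antidiagonal_eq_sum_range_succ_mk]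
  refine ⟨?_, ?_, ?_⟩
  · intro n k
    refine ⟨(hmem n k).1, ?_⟩
    rcases (hmem n k).2 with ⟨m, hm⟩
    exact ⟨m, hm.symm⟩
  · intro hf1
    subst hf1
    have recz' : ∀ n : ℕ, PowerSeries.coeff (n+1) z
        = PowerSeries.coeff n z + PowerSeries.coeff n (z*z) := by
      intro n
      have h := recz n
      rw [pow_one, show z^(1+1) = z*z by ring] at h
      exact h
    have c1 : PowerSeries.coeff 1 z = 2 := by
      rw [recz' 0, sq 0]; simp [Finset.sum_range_succ, c0]; norm_num
    have c2 : PowerSeries.coeff 2 z = 6 := by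
      rw [recz' 1, sq 1]; simp [Finset.sum_range_succ, c0, c1]; norm_num
    have c3 : PowerSeries.coeff 3 z = 22 := by
      rw [recz' 2, sq 2]; simp [Finset.sum_range_succ, c0, c1, c2]; norm_num
    have c4 : PowerSeries.coeff 4 z = 90 := by
      rw [recz' 3, sq 3]; simp [Finset.sum_range_succ, c0, c1, c2, c3]; norm_num
    exact ⟨by rw [hcoe, c0], by rw [hcoe, c1], by rw [hcoe, c2],
      by rw [hcoe, c3], by rw [hcoe, c4]⟩
  · intro hf2
    subst hf2
    have recz' : ∀ n : ℕ, PowerSeries.coeff (n+1) z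
        = PowerSeries.coeff n (z*z) + PowerSeries.coeff n (z*(z*z)) := by
      intro n
      have h := recz n
      rw [show z^2 = z*z by ring, show z^(2+1) = z*(z*z) by ring] at h
      exact h
    have c1 : PowerSeries.coeff 1 z = 2 := by
      rw [recz' 0, cu 0, sq 0]; simp [Finset.sum_range_succ, sq, c0]; norm_num
    have c2 : PowerSeries.coeff 2 z = 10 := by
      rw [recz' 1, cu 1, sq 1]; simp [Finset.sum_range_succ, sq, c0, c1]; norm_num
    have c3 : PowerSeries.coeff 3 z = 66 := by
      rw [recz' 2, cu 2, sq 2]; simp [Finset.sum_range_succ, sq, c0, c1, c2]; norm_num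
    have c4 : PowerSeries.coeff 4 z = 498 := by
      rw [recz' 3, cu 3, sq 3]; simp [Finset.sum_range_succ, sq, c0, c1, c2, c3]; norm_num
    exact ⟨by rw [hcoe, c0], by rw [hcoe, c1], by rw [hcoe, c2],
      by rw [hcoe, c3], by rw [hcoe, c4]⟩

end
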